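/- Let P = (p_0:p_1:p_2) be a singular point of C and write G_P = c · L_1^{λ_1} ⋯ L_l^{λ_l} with c ∈ K ∖ {0}, pairwise non-proportional linear forms L_i, and integers λ_i ≥ 1, and let v_i ∈ ℙ¹(K) be the root of L_i. Then f^{-1}(P) = {v_1, …, v_l} (so C has exactly l branches at P), and for each i the multiplicity of the branch at v_i equals λ_i, i.e., min_{0≤i'<j'≤2} ord_{v_i}(p_{i'} f_{j'} − p_{j'} f_{i'}) = λ_i. -/

import Mathlib

open MvPolynomial

noncomputable section

/-- The coefficient `a_i` of `s^(n-i) t^i` in a binary form `f` of degree `n`. -/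
def bcoeff {K : Type*} [Field K] (n : ℕ) (f : MvPolynomial (Fin 2) K) (i : Fin (n + 1)) : K :=
  MvPolynomial.coeff (Finsupp.single 0 (n - (i : ℕ)) + Finsupp.single 1 (i : ℕ)) f

/-- The binary form of degree `k` with coefficient vector `x`. -/
def formOf {K : Type*} [Field K] (k : ℕ) (x : Fin (k + 1) → K) : MvPolynomial (Fin 2) K :=
  ∑ i : Fin (k + 1),
    MvPolynomial.C (x i) * MvPolynomial.X 0 ^ (k - (i : ℕ)) * MvPolynomial.X 1 ^ (i : ℕ)

/-- The matrix `M_k` associated to the parameterization `f`: the first `n-k+1` rows contain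
the variables `x_0, …, x_k` in staircase position, the last three rows are the coefficient
vectors of `f_0, f_1, f_2`. -/
def Mmat {K : Type*} [Field K] (n k : ℕ) (f : Fin 3 → MvPolynomial (Fin 2) K) :
    Matrix (Fin (n - k + 4)) (Fin (n + 1)) (MvPolynomial (Fin (k + 1)) K) :=
  fun j c =>
    if hj : (j : ℕ) ≤ n - k then
      if h : (j : ℕ) ≤ (c : ℕ) ∧ (c : ℕ) ≤ (j : ℕ) + k then
        MvPolynomial.X ⟨(c : ℕ) - (j : ℕ), by omega⟩
      else 0
    else
      MvPolynomial.C (bcoeff n (f ⟨(j : ℕ) - (n - k + 1), by have := j.isLt; omega⟩) c)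

/-- The set of `(n-k+3) × (n-k+3)` minors of the matrix `M_k`; it generates the ideal
`I_{X_k}`. -/
def minorsSet {K : Type*} [Field K] (n k : ℕ) (f : Fin 3 → MvPolynomial (Fin 2) K) :
    Set (MvPolynomial (Fin (k + 1)) K) :=
  { g | ∃ (r : Fin (n - k + 3) → Fin (n - k + 4)) (c : Fin (n - k + 3) → Fin (n + 1)),
      Function.Injective r ∧ Function.Injective c ∧
      g = ((Mmat n k f).submatrix r c).det }

/-- The projective zero locus `X_k(K) ⊆ ℙ^k(K)` of the ideal of minors of `M_k`. -/
def XkSet {K : Type*} [Field K] (n k : ℕ) (f : Fin 3 → MvPolynomial (Fin 2) K) :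
    Set (Projectivization K (Fin (k + 1) → K)) :=
  { P | ∀ g ∈ minorsSet n k f, MvPolynomial.eval P.rep g = 0 }

/-- Evaluation of the parameterization at a vector `v ∈ K²`. -/
def evalVec {K : Type*} [Field K] (f : Fin 3 → MvPolynomial (Fin 2) K) (v : Fin 2 → K) :
    Fin 3 → K :=
  fun u => MvPolynomial.eval v (f u)

/-- The induced map `f : ℙ¹(K) → ℙ²(K)` (with a junk value where undefined). -/
def projMap {K : Type*} [Field K] (f : Fin 3 → MvPolynomial (Fin 2) K)
    (P : Projectivization K (Fin 2 → K)) : Projectivization K (Fin 3 → K) :=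
  haveI := Classical.propDecidable (evalVec f P.rep ≠ 0)
  if h : evalVec f P.rep ≠ 0 then Projectivization.mk K _ h
  else Projectivization.mk K (fun _ => 1) (fun hc => one_ne_zero (congrFun hc 0))

/-- `f = (f_0, f_1, f_2)` is a proper parameterization of degree `n`: the `f_u` are
homogeneous of degree `n`, have no common zero outside the origin, and the induced map
`ℙ¹(K) → ℙ²(K)` is injective outside some finite set. -/
structure IsProperParam {K : Type*} [Field K] (n : ℕ)
    (f : Fin 3 → MvPolynomial (Fin 2) K) : Prop where
  homog : ∀ u, (f u).IsHomogeneous n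
  no_common_zero : ∀ v : Fin 2 → K, v ≠ 0 → evalVec f v ≠ 0
  gen_injective : ∃ S : Set (Projectivization K (Fin 2 → K)), S.Finite ∧
    Set.InjOn (projMap f) Sᶜ

/-- The homogeneous vanishing ideal of the point `p ∈ ℙ²(K)`. -/
def pointIdeal {K : Type*} [Field K] (p : Fin 3 → K) : Ideal (MvPolynomial (Fin 3) K) :=
  Ideal.span { L | L.IsHomogeneous 1 ∧ MvPolynomial.eval p L = 0 }

/-- The multiplicity of the curve `{F = 0}` at the point `p`:
the largest `m` with `F ∈ I(p)^m`. -/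
def multAt {K : Type*} [Field K] (F : MvPolynomial (Fin 3) K) (p : Fin 3 → K) : ℕ :=
  sSup { m | F ∈ pointIdeal p ^ m }

/-- The cross difference `p_i f_j - p_j f_i`. -/
def crossDiff {K : Type*} [Field K] (f : Fin 3 → MvPolynomial (Fin 2) K) (p : Fin 3 → K)
    (i j : Fin 3) : MvPolynomial (Fin 2) K :=
  MvPolynomial.C (p i) * f j - MvPolynomial.C (p j) * f i

/-- `G` is a greatest common divisor of the three cross differences `p_i f_j - p_j f_i`,
`0 ≤ i < j ≤ 2`. -/
def IsGcdOfCross {K : Type*} [Field K] (f : Fin 3 → MvPolynomial (Fin 2) K) (p : Fin 3 → K)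
    (G : MvPolynomial (Fin 2) K) : Prop :=
  (∀ i j : Fin 3, i < j → G ∣ crossDiff f p i j) ∧
  (∀ D : MvPolynomial (Fin 2) K, (∀ i j : Fin 3, i < j → D ∣ crossDiff f p i j) → D ∣ G)

/-- The linear binary form with root `v = (v 0 : v 1)`. -/
def linFormOf {K : Type*} [Field K] (v : Fin 2 → K) : MvPolynomial (Fin 2) K :=
  MvPolynomial.C (v 1) * MvPolynomial.X 0 - MvPolynomial.C (v 0) * MvPolynomial.X 1

/-- The multiplicity of `v` as a root of the binary form `h`. -/
def ordAt {K : Type*} [Field K] (v : Fin 2 → K) (h : MvPolynomial (Fin 2) K) : ℕ :=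
  sSup { e | linFormOf v ^ e ∣ h }

/-- The point `x ∈ ℙ²` lies on the conic `4 x₀ x₂ - x₁² = 0`. -/
def onConic {K : Type*} [Field K] (x : Fin 3 → K) : Prop :=
  4 * x 0 * x 2 - x 1 ^ 2 = 0


namespace Statement10Aux

variable {K : Type*} [Field K]

lemma eval_linFormOf (v w : Fin 2 → K) : MvPolynomial.eval w (linFormOf v) = v 1 * w 0 - v 0 * w 1 := by
  simp [linFormOf]

lemma linFormOf_ne_zero {v : Fin 2 → K} (hv : v ≠ 0) : linFormOf v ≠ 0 := by
  intro h
  apply hv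
  have h1 := congrArg (eval ![(1:K), 0]) h
  have h2 := congrArg (eval ![(0:K), 1]) h
  rw [eval_linFormOf] at h1 h2
  simp at h1 h2
  funext j
  fin_cases j <;> simp [h1, h2]

lemma prime_X0 : Prime (X 0 : MvPolynomial (Fin 2) K) := by
  rw [← MulEquiv.prime_iff (MvPolynomial.finSuccEquiv K 1).toMulEquiv (p := (X 0 : MvPolynomial (Fin 2) K))]
  have : (MvPolynomial.finSuccEquiv K 1).toMulEquiv (X 0) = Polynomial.X := by
    simp [MvPolynomial.finSuccEquiv_X_zero]
  rw [this]; exact Polynomial.prime_X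

lemma prime_linFormOf_aux {v : Fin 2 → K} (hv : v 1 ≠ 0) : Prime (linFormOf v) := by
  have hC : (C (v 1) : MvPolynomial (Fin 2) K) * C (v 1)⁻¹ = 1 := by
    rw [← C_mul, mul_inv_cancel₀ hv, C_1]
  let σA : MvPolynomial (Fin 2) K →ₐ[K] MvPolynomial (Fin 2) K :=
    aeval ![linFormOf v, X 1]
  let τA : MvPolynomial (Fin 2) K →ₐ[K] MvPolynomial (Fin 2) K :=
    aeval ![C (v 1)⁻¹ * (X 0 + C (v 0) * X 1), X 1]
  have h1 : σA.comp τA = AlgHom.id K _ := by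
    apply MvPolynomial.algHom_ext
    intro i
    fin_cases i
    · show σA (τA (X 0)) = X 0
      simp only [σA, τA, aeval_X, map_mul, map_add, aeval_C, algebraMap_eq,
        Matrix.cons_val_zero, Matrix.cons_val_one, Matrix.head_cons, linFormOf]
      linear_combination (X 0 : MvPolynomial (Fin 2) K) * hC
    · show σA (τA (X 1)) = X 1
      simp [σA, τA]
  have h2 : τA.comp σA = AlgHom.id K _ := by
    apply MvPolynomial.algHom_ext
    intro i
    fin_cases i
    · show τA (σA (X 0)) = X 0
      simp only [σA, τA, aeval_X, linFormOf, map_sub, map_mul, map_add, aeval_C, algebraMap_eq,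
        Matrix.cons_val_zero, Matrix.cons_val_one, Matrix.head_cons]
      linear_combination (X 0 + C (v 0) * (X 1 : MvPolynomial (Fin 2) K)) * hC
    · show τA (σA (X 1)) = X 1
      simp [σA, τA]
  let e : MvPolynomial (Fin 2) K ≃ₐ[K] MvPolynomial (Fin 2) K := AlgEquiv.ofAlgHom σA τA h1 h2
  have he : e.toMulEquiv (X 0) = linFormOf v := by
    show σA (X 0) = linFormOf v
    simp [σA]
  have := (MulEquiv.prime_iff e.toMulEquiv (p := (X 0 : MvPolynomial (Fin 2) K))).mpr prime_X0
  rwa [he] at this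

lemma prime_linFormOf {v : Fin 2 → K} (hv : v ≠ 0) : Prime (linFormOf v) := by
  by_cases h1 : v 1 ≠ 0
  · exact prime_linFormOf_aux h1
  · push_neg at h1
    have h0 : v 0 ≠ 0 := by
      intro h0; apply hv; funext j; fin_cases j <;> simp [h0, h1]
    have hw : Prime (linFormOf ![v 1, v 0]) := prime_linFormOf_aux (by simpa using h0)
    have := (MulEquiv.prime_iff (renameEquiv K (Equiv.swap (0 : Fin 2) 1)).toMulEquiv
      (p := linFormOf ![v 1, v 0])).mpr hw
    have heq : (renameEquiv K (Equiv.swap (0 : Fin 2) 1)).toMulEquiv (linFormOf ![v 1, v 0])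
        = - linFormOf v := by
      show (rename (Equiv.swap (0 : Fin 2) 1)) (linFormOf ![v 1, v 0]) = - linFormOf v
      simp only [linFormOf, map_sub, map_mul, rename_C, rename_X,
        Equiv.swap_apply_left, Equiv.swap_apply_right]
      simp only [Matrix.cons_val_zero, Matrix.cons_val_one, Matrix.head_cons]
      ring
    rw [heq] at this
    simpa using this.neg

lemma degree_eq_of_mem_support {h : MvPolynomial (Fin 2) K} {n : ℕ}
    (hh : h.IsHomogeneous n) {m : Fin 2 →₀ ℕ} (hm : m ∈ h.support) :
    m 0 + m 1 = n := by
  have := hh (MvPolynomial.mem_support_iff.mp hm)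
  rw [← this]
  simp [Finsupp.weight_apply, Finsupp.sum_fintype, Fin.sum_univ_two]

lemma monomial_eq_prod (m : Fin 2 →₀ ℕ) (c : K) :
    (monomial m c : MvPolynomial (Fin 2) K) = C c * X 0 ^ (m 0) * X 1 ^ (m 1) := by
  rw [monomial_eq, Finsupp.prod_fintype _ _ (fun i => pow_zero _), Fin.prod_univ_two]
  ring

lemma prod_support_pow (w : Fin 2 → K) (m : Fin 2 →₀ ℕ) :
    ∏ i ∈ m.support, w i ^ m i = w 0 ^ m 0 * w 1 ^ m 1 := by
  rw [← Fin.prod_univ_two fun i => w i ^ m i]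
  exact Finset.prod_subset (Finset.subset_univ _)
    (by intro i _ hi; rw [Finsupp.notMem_support_iff.mp hi, pow_zero])

lemma keyA {h : MvPolynomial (Fin 2) K} {n : ℕ} (hh : h.IsHomogeneous n) (w : Fin 2 → K) :
    linFormOf w ∣ C (w 1) ^ n * h - C (eval w h) * X 1 ^ n := by
  have hsum : C (w 1) ^ n * h - C (eval w h) * X 1 ^ n =
      ∑ m ∈ h.support, (C (w 1) ^ n * monomial m (coeff m h)
        - C (coeff m h * (w 0 ^ (m 0) * w 1 ^ (m 1))) * X 1 ^ n) := by
    rw [Finset.sum_sub_distrib, ← Finset.mul_sum, ← as_sum, ← Finset.sum_mul]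
    congr 2
    rw [eval_eq, map_sum]
    congr 1
    funext m
    rw [prod_support_pow]
  rw [hsum]
  apply Finset.dvd_sum
  intro m hm
  obtain rfl : n = m 0 + m 1 := (degree_eq_of_mem_support hh hm).symm
  rw [monomial_eq_prod]
  have key : C (w 1) ^ (m 0 + m 1) * (C (coeff m h) * X 0 ^ (m 0) * X 1 ^ (m 1))
      - C (coeff m h * (w 0 ^ (m 0) * w 1 ^ (m 1))) * X 1 ^ (m 0 + m 1)
      = (C (coeff m h) : MvPolynomial (Fin 2) K) * ((C (w 1) * X 1) ^ (m 1) *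
        ((C (w 1) * X 0) ^ (m 0) - (C (w 0) * X 1) ^ (m 0))) := by
    simp only [map_mul, map_pow]
    ring
  have h3 : linFormOf w ∣ (C (coeff m h) : MvPolynomial (Fin 2) K) * ((C (w 1) * X 1) ^ (m 1) *
      ((C (w 1) * X 0) ^ (m 0) - (C (w 0) * X 1) ^ (m 0))) := by
    unfold linFormOf
    exact ((sub_dvd_pow_sub_pow _ _ (m 0)).mul_left _).mul_left _
  exact h3.trans (dvd_of_eq key.symm)

lemma keyB {h : MvPolynomial (Fin 2) K} {n : ℕ} (hh : h.IsHomogeneous n) (w : Fin 2 → K) :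
    linFormOf w ∣ C (w 0) ^ n * h - C (eval w h) * X 0 ^ n := by
  have hsum : C (w 0) ^ n * h - C (eval w h) * X 0 ^ n =
      ∑ m ∈ h.support, (C (w 0) ^ n * monomial m (coeff m h)
        - C (coeff m h * (w 0 ^ (m 0) * w 1 ^ (m 1))) * X 0 ^ n) := by
    rw [Finset.sum_sub_distrib, ← Finset.mul_sum, ← as_sum, ← Finset.sum_mul]
    congr 2
    rw [eval_eq, map_sum]
    congr 1
    funext m
    rw [prod_support_pow]
  rw [hsum]
  apply Finset.dvd_sum
  intro m hm
  obtain rfl : n = m 0 + m 1 := (degree_eq_of_mem_support hh hm).symm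
  rw [monomial_eq_prod]
  have key : C (w 0) ^ (m 0 + m 1) * (C (coeff m h) * X 0 ^ (m 0) * X 1 ^ (m 1))
      - C (coeff m h * (w 0 ^ (m 0) * w 1 ^ (m 1))) * X 0 ^ (m 0 + m 1)
      = (- C (coeff m h) : MvPolynomial (Fin 2) K) * ((C (w 0) * X 0) ^ (m 0) *
        ((C (w 1) * X 0) ^ (m 1) - (C (w 0) * X 1) ^ (m 1))) := by
    simp only [map_mul, map_pow]
    ring
  have h3 : linFormOf w ∣ (- C (coeff m h) : MvPolynomial (Fin 2) K) * ((C (w 0) * X 0) ^ (m 0) *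
      ((C (w 1) * X 0) ^ (m 1) - (C (w 0) * X 1) ^ (m 1))) := by
    unfold linFormOf
    exact ((sub_dvd_pow_sub_pow _ _ (m 1)).mul_left _).mul_left _
  exact h3.trans (dvd_of_eq key.symm)

lemma linFormOf_dvd_of_eval_zero {h : MvPolynomial (Fin 2) K} {n : ℕ}
    (hh : h.IsHomogeneous n) {w : Fin 2 → K} (hw : w ≠ 0) (h0 : eval w h = 0) :
    linFormOf w ∣ h := by
  by_cases h1 : w 1 ≠ 0
  · have := keyA hh w
    rw [h0, map_zero, zero_mul, sub_zero] at this
    have hu : IsUnit ((C (w 1) : MvPolynomial (Fin 2) K) ^ n) :=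
      ((isUnit_iff_ne_zero.mpr h1).map C).pow n
    exact (hu.dvd_mul_left).mp this
  · push_neg at h1
    have h0' : w 0 ≠ 0 := by
      intro hz; apply hw; funext j; fin_cases j <;> simp [hz, h1]
    have := keyB hh w
    rw [h0, map_zero, zero_mul, sub_zero] at this
    have hu : IsUnit ((C (w 0) : MvPolynomial (Fin 2) K) ^ n) :=
      ((isUnit_iff_ne_zero.mpr h0').map C).pow n
    exact (hu.dvd_mul_left).mp this

lemma ordAt_bddAbove {v : Fin 2 → K} (hv : v ≠ 0) {h : MvPolynomial (Fin 2) K} (hh : h ≠ 0) :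
    BddAbove { e | linFormOf v ^ e ∣ h } := by
  have hfin : FiniteMultiplicity (linFormOf v) h :=
    FiniteMultiplicity.of_not_isUnit (prime_linFormOf hv).not_isUnit hh
  obtain ⟨N, hN⟩ := hfin
  refine ⟨N, fun e he => ?_⟩
  by_contra hlt
  push_neg at hlt
  exact hN ((pow_dvd_pow _ hlt).trans he)

lemma le_ordAt {v : Fin 2 → K} (hv : v ≠ 0) {h : MvPolynomial (Fin 2) K} (hh : h ≠ 0)
    {k : ℕ} (hk : linFormOf v ^ k ∣ h) : k ≤ ordAt v h :=
  le_csSup (ordAt_bddAbove hv hh) hk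

lemma ordAt_eq {v : Fin 2 → K} {h : MvPolynomial (Fin 2) K}
    {k : ℕ} (hk : linFormOf v ^ k ∣ h) (hk' : ¬ linFormOf v ^ (k + 1) ∣ h) :
    ordAt v h = k := by
  apply le_antisymm
  · apply csSup_le ⟨k, hk⟩
    intro e he
    by_contra hlt
    push_neg at hlt
    exact hk' ((pow_dvd_pow _ hlt).trans he)
  · refine le_csSup ⟨k, fun e he => ?_⟩ hk
    by_contra hlt
    push_neg at hlt
    exact hk' ((pow_dvd_pow _ hlt).trans he)

lemma prop_of_det {v w : Fin 2 → K} (hv : v ≠ 0) (hdet : v 1 * w 0 = v 0 * w 1) :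
    ∃ d : K, w = d • v := by
  by_cases h0 : v 0 ≠ 0
  · refine ⟨w 0 / v 0, ?_⟩
    funext j
    fin_cases j
    · show w 0 = w 0 / v 0 * v 0
      field_simp
    · show w 1 = w 0 / v 0 * v 1
      field_simp
      linear_combination -hdet
  · push_neg at h0
    have h1 : v 1 ≠ 0 := by
      intro h1; apply hv; funext j; fin_cases j <;> simp [h0, h1]
    refine ⟨w 1 / v 1, ?_⟩
    funext j
    fin_cases j
    · show w 0 = w 1 / v 1 * v 0
      rw [h0, mul_zero]
      have hz : v 1 * w 0 = 0 := by rw [hdet, h0, zero_mul]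
      exact (mul_eq_zero.mp hz).resolve_left h1
    · show w 1 = w 1 / v 1 * v 1
      field_simp

end Statement10Aux

open Statement10Aux in

/-- Let `P` be a singular point of `C` and write `G_P = c·L_1^{λ_1}⋯L_l^{λ_l}` with pairwise
non-proportional linear forms with roots `v_1, …, v_l`. Then `f⁻¹(P) = {v_1, …, v_l}` (so `C`
has exactly `l` branches at `P`) and the `i`-th branch has multiplicity `λ_i`, i.e.
`min_{i'<j'} ord_{v_i}(p_{i'} f_{j'} - p_{j'} f_{i'}) = λ_i`. -/

theorem statement_10 {K : Type*} [Field K] [IsAlgClosed K] [CharZero K]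
    (n : ℕ) (hn : 3 ≤ n) (f : Fin 3 → MvPolynomial (Fin 2) K)
    (hf : IsProperParam n f)
    (F : MvPolynomial (Fin 3) K) (hFirr : Irreducible F) (hFhom : F.IsHomogeneous n)
    (hFf : MvPolynomial.aeval f F = 0)
    (p : Fin 3 → K) (hp : p ≠ 0) (hsing : 2 ≤ multAt F p)
    (G : MvPolynomial (Fin 2) K) (hG : IsGcdOfCross f p G)
    (l : ℕ) (hl : 1 ≤ l) (c : K) (hc : c ≠ 0)
    (v : Fin l → Fin 2 → K) (hv : ∀ i, v i ≠ 0)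
    (hdist : ∀ i j : Fin l, i ≠ j → ∀ d : K, v j ≠ d • v i)
    (lam : Fin l → ℕ) (hlam : ∀ i, 1 ≤ lam i)
    (hfact : G = MvPolynomial.C c * ∏ i : Fin l, linFormOf (v i) ^ lam i) :
    -- f⁻¹(P) = {v_1, …, v_l}
    (∀ w : Fin 2 → K, w ≠ 0 →
      ((∃ d : K, d ≠ 0 ∧ evalVec f w = d • p) ↔
        ∃ i : Fin l, ∃ d : K, d ≠ 0 ∧ w = d • v i)) ∧
    -- the branch through v_i has multiplicity λ_i
    (∀ i : Fin l,
      (∀ i' j' : Fin 3, i' < j' → crossDiff f p i' j' ≠ 0 →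
        lam i ≤ ordAt (v i) (crossDiff f p i' j')) ∧
      (∃ i' j' : Fin 3, i' < j' ∧ crossDiff f p i' j' ≠ 0 ∧
        ordAt (v i) (crossDiff f p i' j') = lam i)) := by
  classical
  have hGdvdL : ∀ i : Fin l, linFormOf (v i) ∣ G := by
    intro i
    rw [hfact]
    exact ((dvd_pow_self (linFormOf (v i)) (Nat.one_le_iff_ne_zero.mp (hlam i))).trans
      (Finset.dvd_prod_of_mem (fun j => linFormOf (v j) ^ lam j) (Finset.mem_univ i))).mul_left _
  have hG0 : G ≠ 0 := by
    rw [hfact]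
    apply mul_ne_zero (by simpa using hc)
    exact Finset.prod_ne_zero_iff.mpr fun i _ => pow_ne_zero _ (linFormOf_ne_zero (hv i))
  have hcrossHom : ∀ a b : Fin 3, (crossDiff f p a b).IsHomogeneous n :=
    fun a b => ((hf.homog b).C_mul _).sub ((hf.homog a).C_mul _)
  have hevalCross : ∀ (w : Fin 2 → K) (a b : Fin 3),
      MvPolynomial.eval w (crossDiff f p a b) = p a * evalVec f w b - p b * evalVec f w a := by
    intro w a b; simp [crossDiff, evalVec]
  have hself : ∀ w : Fin 2 → K, MvPolynomial.eval w (linFormOf w) = 0 := by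
    intro w; rw [eval_linFormOf]; ring
  constructor
  · intro w hw
    constructor
    · rintro ⟨d, hd, hq⟩
      have hvanish : ∀ a b : Fin 3, MvPolynomial.eval w (crossDiff f p a b) = 0 := by
        intro a b
        rw [hevalCross w a b, hq]
        simp only [Pi.smul_apply, smul_eq_mul]
        ring
      have hLwdvd : linFormOf w ∣ G := by
        apply hG.2
        intro a b hab
        exact linFormOf_dvd_of_eval_zero (hcrossHom a b) hw (hvanish a b)
      rw [hfact] at hLwdvd
      have hLw : Prime (linFormOf w) := prime_linFormOf hw
      have h2 : linFormOf w ∣ ∏ i : Fin l, linFormOf (v i) ^ lam i := by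
        rcases (hLw.dvd_mul).mp hLwdvd with h | h
        · exact absurd (isUnit_of_dvd_unit h ((isUnit_iff_ne_zero.mpr hc).map
            (MvPolynomial.C : K →+* MvPolynomial (Fin 2) K))) hLw.not_isUnit
        · exact h
      obtain ⟨i, -, hidvd⟩ := hLw.exists_mem_finset_dvd h2
      have hLi : linFormOf w ∣ linFormOf (v i) := hLw.dvd_of_dvd_pow hidvd
      obtain ⟨g, hg'⟩ := hLi
      have hz : MvPolynomial.eval w (linFormOf (v i)) = 0 := by
        rw [hg', map_mul, hself w, zero_mul]
      rw [eval_linFormOf] at hz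
      obtain ⟨d', hd'⟩ := prop_of_det (hv i)
        (show v i 1 * w 0 = v i 0 * w 1 by linear_combination hz)
      refine ⟨i, d', fun h0 => ?_, hd'⟩
      apply hw
      rw [hd', h0, zero_smul]
    · rintro ⟨i, d, hd, rfl⟩
      set w := d • v i with hwdef
      have hweval : MvPolynomial.eval w (linFormOf (v i)) = 0 := by
        rw [eval_linFormOf]
        simp only [hwdef, Pi.smul_apply, smul_eq_mul]
        ring
      have hvanish : ∀ a b : Fin 3, a < b → MvPolynomial.eval w (crossDiff f p a b) = 0 := by
        intro a b hab
        obtain ⟨g, hg'⟩ := (hGdvdL i).trans (hG.1 a b hab)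
        rw [hg', map_mul, hweval, zero_mul]
      have hq0 : evalVec f w ≠ 0 := hf.no_common_zero _ hw
      have hcr : ∀ a b : Fin 3, p a * evalVec f w b = p b * evalVec f w a := by
        intro a b
        rcases lt_trichotomy a b with h | h | h
        · have := hvanish a b h
          rw [hevalCross w a b] at this
          exact sub_eq_zero.mp this
        · rw [h]
        · have := hvanish b a h
          rw [hevalCross w b a] at this
          exact (sub_eq_zero.mp this).symm
      obtain ⟨u, hu⟩ : ∃ u, p u ≠ 0 := by
        by_contra hcon
        push_neg at hcon
        exact hp (funext fun u => hcon u)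
      refine ⟨evalVec f w u / p u, fun h0 => ?_, ?_⟩
      · apply hq0
        have hqu : evalVec f w u = 0 := by
          rcases div_eq_zero_iff.mp h0 with h | h
          · exact h
          · exact absurd h hu
        funext b
        have hb := hcr u b
        rw [hqu, mul_zero] at hb
        show evalVec f w b = 0
        rcases mul_eq_zero.mp hb with h | h
        · exact absurd h hu
        · exact h
      · funext b
        show evalVec f w b = (evalVec f w u / p u) * p b
        rw [div_mul_eq_mul_div, eq_div_iff hu]
        linear_combination hcr u b
  · intro i
    have hLiP : Prime (linFormOf (v i)) := prime_linFormOf (hv i)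
    have hpowG : linFormOf (v i) ^ lam i ∣ G := by
      rw [hfact]
      exact (Finset.dvd_prod_of_mem _ (Finset.mem_univ i)).mul_left _
    constructor
    · intro a b hab hne
      exact le_ordAt (hv i) hne (hpowG.trans (hG.1 a b hab))
    · by_cases hall : ∀ a b : Fin 3, a < b → G * linFormOf (v i) ∣ crossDiff f p a b
      · exfalso
        obtain ⟨k, hk⟩ := hG.2 _ hall
        have h1 : (1 : MvPolynomial (Fin 2) K) = linFormOf (v i) * k := by
          apply mul_left_cancel₀ hG0
          rw [mul_one]
          nth_rewrite 1 [hk]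
          ring
        exact hLiP.not_isUnit (IsUnit.of_mul_eq_one _ h1.symm)
      · push_neg at hall
        obtain ⟨a, b, hab, hnd⟩ := hall
        have hcd0 : crossDiff f p a b ≠ 0 := by
          intro h0
          exact hnd (h0 ▸ dvd_zero _)
        refine ⟨a, b, hab, hcd0, ?_⟩
        apply ordAt_eq (hpowG.trans (hG.1 a b hab))
        intro hdvd
        apply hnd
        obtain ⟨g, hg'⟩ := hG.1 a b hab
        have hLg : linFormOf (v i) ∣ g := by
          have h1 : linFormOf (v i) ^ lam i * linFormOf (v i) ∣
              linFormOf (v i) ^ lam i *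
                (MvPolynomial.C c * ((∏ j ∈ Finset.univ.erase i, linFormOf (v j) ^ lam j) * g)) := by
            rw [← pow_succ]
            refine hdvd.trans (dvd_of_eq ?_)
            rw [hg', hfact, ← Finset.mul_prod_erase _ _ (Finset.mem_univ i)]
            ring
          have h2 := (mul_dvd_mul_iff_left
            (pow_ne_zero (lam i) (linFormOf_ne_zero (hv i)))).mp h1
          have h3 : linFormOf (v i) ∣
              (∏ j ∈ Finset.univ.erase i, linFormOf (v j) ^ lam j) * g := by
            rcases hLiP.dvd_mul.mp h2 with h | h
            · exact absurd (isUnit_of_dvd_unit h ((isUnit_iff_ne_zero.mpr hc).map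
                (MvPolynomial.C : K →+* MvPolynomial (Fin 2) K))) hLiP.not_isUnit
            · exact h
          rcases hLiP.dvd_mul.mp h3 with h | h
          · exfalso
            obtain ⟨j, hj, hjd⟩ := hLiP.exists_mem_finset_dvd h
            have hji : j ≠ i := Finset.ne_of_mem_erase hj
            obtain ⟨g2, hg2⟩ := hLiP.dvd_of_dvd_pow hjd
            have hz : MvPolynomial.eval (v i) (linFormOf (v j)) = 0 := by
              rw [hg2, map_mul, hself (v i), zero_mul]
            rw [eval_linFormOf] at hz
            obtain ⟨d, hd⟩ := prop_of_det (hv i)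
              (show v i 1 * v j 0 = v i 0 * v j 1 by linear_combination - hz)
            exact hdist i j hji.symm d hd
          · exact h
        obtain ⟨g2, hg2⟩ := hLg
        refine ⟨g2, ?_⟩
        rw [hg', hg2]
        ring


end
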